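/- Let α=(α_1,…,α_{2s}) be a composition of n with an even number of parts and let sh(α)=(α_2,…,α_{2s},α_1) be its one-step cyclic shift. Then the rank sequence of F̄(sh(α)) is the reverse of the rank sequence of F̄(α): r̄(sh(α))_k = r̄(α)_{n−k} for all k. In particular, for every k ∈ ℕ and every even number of parts, the rank sequence of F̄((k,1,1,…,1)) is symmetric. -/

import Mathlib

attribute [local instance] Classical.propDecidable

noncomputable section

/-- `α` is a composition: a nonempty list of positive integers. -/
def IsComposition (α : List ℕ) : Prop := α ≠ [] ∧ ∀ p ∈ α, 0 < p

/-- The 0-based index of the segment of the composition `α` containing edge `e`,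
where edge `e` joins nodes `e` and `e+1` (nodes are 0-indexed, so node `i`
is the element `x_{i+1}` of the fence). -/
def segIdx (α : List ℕ) (e : ℕ) : ℕ :=
  ((List.range α.length).filter fun j => decide ((α.take (j + 1)).sum ≤ e)).length

/-- Edge `e` of the fence of `α` points upwards (node `e` ⪯ node `e+1`):
edges in odd (1-based) segments point up, edges in even segments point down. -/
def upEdge (α : List ℕ) (e : ℕ) : Prop := Even (segIdx α e)

/-- The defining relations of the fence poset `F(α)` on `Fin (α.sum + 1)`:
`fenceStep α x y` holds iff `x ⪯ y` is one of the generating (cover) relations. -/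
def fenceStep (α : List ℕ) (x y : Fin (α.sum + 1)) : Prop :=
  (y.val = x.val + 1 ∧ upEdge α x.val) ∨ (x.val = y.val + 1 ∧ ¬ upEdge α y.val)

/-- The order of the fence poset `F(α)`, i.e. the partial order generated by
the defining relations. -/
def fenceLE (α : List ℕ) : Fin (α.sum + 1) → Fin (α.sum + 1) → Prop :=
  Relation.ReflTransGen (fenceStep α)

/-- Lower (order) ideals of the fence poset `F(α)`. -/
def IsFenceIdeal (α : List ℕ) (I : Finset (Fin (α.sum + 1))) : Prop :=
  ∀ x y, fenceLE α x y → y ∈ I → x ∈ I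

/-- `fenceRank α k` is the number of lower ideals of `F(α)` of size `k`;
the rank sequence of `F(α)` is `fenceRank α 0, …, fenceRank α (α.sum + 1)`. -/
def fenceRank (α : List ℕ) (k : ℕ) : ℕ :=
  Nat.card {I : Finset (Fin (α.sum + 1)) // IsFenceIdeal α I ∧ I.card = k}

/-- Defining relations of the circular fence poset `F̄(α)` on `Fin α.sum`:
as for the fence, but node `α.sum` (that is, `x_{n+1}`) is identified with node `0`. -/
def cStep (α : List ℕ) (x y : Fin α.sum) : Prop :=
  (y.val = (x.val + 1) % α.sum ∧ upEdge α x.val) ∨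
  (x.val = (y.val + 1) % α.sum ∧ ¬ upEdge α y.val)

/-- The order of the circular fence poset `F̄(α)`. -/
def cLE (α : List ℕ) : Fin α.sum → Fin α.sum → Prop :=
  Relation.ReflTransGen (cStep α)

/-- Lower (order) ideals of the circular fence poset `F̄(α)`. -/
def IsCIdeal (α : List ℕ) (I : Finset (Fin α.sum)) : Prop :=
  ∀ x y, cLE α x y → y ∈ I → x ∈ I

/-- `cRank α k` is the number of lower ideals of `F̄(α)` of size `k`;
the rank sequence of `F̄(α)` is `cRank α 0, …, cRank α α.sum`. -/
def cRank (α : List ℕ) (k : ℕ) : ℕ :=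
  Nat.card {I : Finset (Fin α.sum) // IsCIdeal α I ∧ I.card = k}

/-- The sequence `a 0, …, a m` is unimodal. -/
def Unimodal (a : ℕ → ℕ) (m : ℕ) : Prop :=
  ∃ j ≤ m, (∀ i < j, a i ≤ a (i + 1)) ∧ ∀ i, j ≤ i → i < m → a (i + 1) ≤ a i

/-- The sequence `a 0, …, a m` is bottom interlacing:
`a m ≤ a 0 ≤ a (m-1) ≤ a 1 ≤ ⋯ ≤ a ⌊m/2⌋`. -/
def BottomInterlacing (a : ℕ → ℕ) (m : ℕ) : Prop :=
  (∀ i, 2 * i ≤ m → a (m - i) ≤ a i) ∧ ∀ i, 2 * i + 1 < m → a i ≤ a (m - 1 - i)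

/-- The sequence `a 0, …, a m` is top interlacing:
`a 0 ≤ a m ≤ a 1 ≤ a (m-1) ≤ ⋯ ≤ a ⌈m/2⌉`. -/
def TopInterlacing (a : ℕ → ℕ) (m : ℕ) : Prop :=
  (∀ i, 2 * i ≤ m → a i ≤ a (m - i)) ∧ ∀ i, 2 * i + 1 < m → a (m - i) ≤ a (i + 1)

/-- The sequence `a 0, …, a m` is symmetric. -/
def SymmetricSeq (a : ℕ → ℕ) (m : ℕ) : Prop := ∀ k ≤ m, a k = a (m - k)

/-- Rowmotion for the order relation `r` on `Fin m`: `rhoRel r I` is the lower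
ideal generated by the minimal elements of the complement of `I`. -/
def rhoRel {m : ℕ} (r : Fin m → Fin m → Prop) (I : Finset (Fin m)) : Finset (Fin m) :=
  Finset.univ.filter fun x => ∃ y, y ∉ I ∧ (∀ z, r z y → z ≠ y → z ∈ I) ∧ r x y

/-- The (forward) orbit of `I` under a rowmotion map `ρ`. -/
def orbitOf {m : ℕ} (ρ : Finset (Fin m) → Finset (Fin m)) (I : Finset (Fin m)) :
    Finset (Finset (Fin m)) :=
  Finset.univ.filter fun J => ∃ k, ρ^[k] I = J

/-- The number of maximal elements of `I` viewed as a subposet of the order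
with relation `r`. -/
def maxCount {m : ℕ} (r : Fin m → Fin m → Prop) (I : Finset (Fin m)) : ℕ :=
  (I.filter fun x => ∀ y ∈ I, r x y → y = x).card

end

section Aux

lemma countP_range_eq (p : ℕ → Bool) (j L : ℕ) (h : ∀ i, p i = true ↔ i < j) :
    (List.range L).countP p = min j L := by
  induction L with
  | zero => simp
  | succ L ih =>
    rw [List.range_succ, List.countP_append, ih]
    by_cases hL : L < j
    · have : p L = true := (h L).mpr hL
      simp [List.countP_cons, this]; omega
    · have : p L = false := by
        rcases Bool.eq_false_or_eq_true (p L) with h' | h'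
        · exact absurd ((h L).mp h') hL
        · exact h'
      simp [List.countP_cons, this]; omega

lemma sum_take_mono (α : List ℕ) {i j : ℕ} (h : i ≤ j) :
    (α.take i).sum ≤ (α.take j).sum := by
  obtain ⟨t, ht⟩ := List.take_prefix i (α.take j)
  rw [List.take_take, min_eq_left h] at ht
  calc (α.take i).sum ≤ (α.take i).sum + t.sum := Nat.le_add_right _ _
    _ = (α.take j).sum := by rw [← List.sum_append, ht]

lemma segIdx_eq_of (α : List ℕ) (e j : ℕ) (hj : j < α.length)
    (h1 : (α.take j).sum ≤ e) (h2 : e < (α.take (j + 1)).sum) : segIdx α e = j := by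
  unfold segIdx
  rw [← List.countP_eq_length_filter]
  rw [countP_range_eq _ j _ ?_, min_eq_left hj.le]
  intro i
  simp only [decide_eq_true_eq]
  constructor
  · intro hi
    by_contra hij
    exact absurd (lt_of_lt_of_le h2 (sum_take_mono α (by omega))) (not_lt.mpr hi)
  · intro hi
    exact le_trans (sum_take_mono α (by omega)) h1

lemma exists_seg (α : List ℕ) (e : ℕ) (he : e < α.sum) :
    ∃ j, j < α.length ∧ (α.take j).sum ≤ e ∧ e < (α.take (j + 1)).sum := by
  have hL : 1 ≤ α.length := by
    cases α with
    | nil => simp at he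
    | cons a l => simp
  have hP : ∃ j, e < (α.take (j + 1)).sum :=
    ⟨α.length - 1, by rw [show α.length - 1 + 1 = α.length by omega, List.take_length]; exact he⟩
  refine ⟨Nat.find hP, ?_, ?_, Nat.find_spec hP⟩
  · have : Nat.find hP ≤ α.length - 1 := Nat.find_le
      (by rw [show α.length - 1 + 1 = α.length by omega, List.take_length]; exact he)
    omega
  · rcases h : Nat.find hP with _ | m
    · simp
    · have := Nat.find_min hP (show m < Nat.find hP by omega)
      exact not_lt.mp this

lemma segIdx_spec (α : List ℕ) (e : ℕ) (he : e < α.sum) :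
    segIdx α e < α.length ∧ (α.take (segIdx α e)).sum ≤ e ∧
      e < (α.take (segIdx α e + 1)).sum := by
  obtain ⟨j, hj, h1, h2⟩ := exists_seg α e he
  rw [segIdx_eq_of α e j hj h1 h2]
  exact ⟨hj, h1, h2⟩

end Aux

section Parity

lemma upEdge_rotate (a : ℕ) (β : List ℕ) (hL : Even (β.length + 1)) (e : ℕ)
    (he : e < a + β.sum) :
    (upEdge (β ++ [a]) e ↔ ¬ upEdge (a :: β) ((e + a) % (a + β.sum))) := by
  by_cases hc : e < β.sum
  · obtain ⟨j, hj, h1, h2⟩ := exists_seg β e hc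
    have hra : segIdx (β ++ [a]) e = j := by
      apply segIdx_eq_of _ _ _ (by simp; omega)
      · rwa [List.take_append_of_le_length (by omega)]
      · rwa [List.take_append_of_le_length (by omega)]
    have hmod : (e + a) % (a + β.sum) = e + a := Nat.mod_eq_of_lt (by omega)
    have hα : segIdx (a :: β) (e + a) = j + 1 := by
      apply segIdx_eq_of _ _ _ (by simp; omega)
      · rw [List.take_succ_cons, List.sum_cons]; omega
      · rw [List.take_succ_cons, List.sum_cons]; omega
    rw [upEdge, upEdge, hra, hmod, hα]
    simp [Nat.even_add_one]
  · have h1 : β.sum ≤ e := le_of_not_gt hc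
    have hra : segIdx (β ++ [a]) e = β.length := by
      apply segIdx_eq_of _ _ _ (by simp)
      · rw [List.take_left]; exact h1
      · rw [List.take_of_length_le (by simp)]
        rw [List.sum_append]; simp; omega
    have hmod : (e + a) % (a + β.sum) = e - β.sum := by
      rw [Nat.mod_eq_sub_mod (by omega), Nat.mod_eq_of_lt (by omega)]
      omega
    have hα : segIdx (a :: β) (e - β.sum) = 0 := by
      apply segIdx_eq_of _ _ _ (by simp)
      · simp
      · simp; omega
    rw [upEdge, upEdge, hra, hmod, hα]
    rw [Nat.even_add_one] at hL
    simp [hL]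

lemma sum_take_reverse (α : List ℕ) (i : ℕ) :
    (α.reverse.take i).sum = α.sum - (α.take (α.length - i)).sum := by
  rw [List.take_reverse, List.sum_reverse]
  have := congrArg List.sum (List.take_append_drop (α.length - i) α)
  rw [List.sum_append] at this
  omega

lemma upEdge_reverse (α : List ℕ) (hL : Even α.length) (e : ℕ) (he : e < α.sum) :
    upEdge α.reverse (α.sum - 1 - e) ↔ ¬ upEdge α e := by
  obtain ⟨j, hjL, h1, h2⟩ := exists_seg α e he
  have hsle : (α.take (j + 1)).sum ≤ α.sum := by
    have := sum_take_mono α (show j + 1 ≤ α.length by omega)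
    rwa [List.take_length] at this
  have hsle' : (α.take j).sum ≤ α.sum := by
    have := sum_take_mono α (show j ≤ α.length by omega)
    rwa [List.take_length] at this
  have hje : segIdx α e = j := segIdx_eq_of α e j hjL h1 h2
  have hrev : segIdx α.reverse (α.sum - 1 - e) = α.length - 1 - j := by
    apply segIdx_eq_of
    · rw [List.length_reverse]; omega
    · rw [sum_take_reverse]
      rw [show α.length - (α.length - 1 - j) = j + 1 by omega]
      omega
    · rw [sum_take_reverse]
      rw [show α.length - (α.length - 1 - j + 1) = j by omega]
      omega
  rw [upEdge, upEdge, hje, hrev]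
  obtain ⟨t, ht⟩ := hL
  rw [Nat.even_iff, Nat.even_iff]
  omega

end Parity

section ModAux

lemma mod_shift (n a u v : ℕ) (hu : u < n) :
    u = (v + 1) % n ↔ (u + a) % n = ((v + a) % n + 1) % n := by
  have hn : 0 < n := by omega
  rw [Nat.mod_add_mod]
  constructor
  · rintro rfl
    rw [Nat.mod_add_mod]
    congr 1
    omega
  · intro h
    have h' : u + a ≡ (v + 1) + a [MOD n] := by
      show (u + a) % n = ((v + 1) + a) % n
      rw [h]; congr 1; omega
    have h2 := Nat.ModEq.add_right_cancel' a h'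
    rwa [Nat.ModEq, Nat.mod_eq_of_lt hu] at h2

lemma neg_mod_char (n u : ℕ) (hu : u < n) :
    (n - u) % n = if u = 0 then 0 else n - u := by
  split_ifs with h
  · subst h; simp
  · exact Nat.mod_eq_of_lt (by omega)

lemma succ_mod_char (n u : ℕ) (hu : u < n) :
    (u + 1) % n = if u + 1 = n then 0 else u + 1 := by
  split_ifs with h
  · rw [h, Nat.mod_self]
  · exact Nat.mod_eq_of_lt (by omega)

lemma mod_char_or (n m : ℕ) (hm : m ≤ n) (hn : 0 < n) :
    (m = n ∧ m % n = 0) ∨ (m ≠ n ∧ m % n = m) := by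
  rcases eq_or_lt_of_le hm with h | h
  · left; exact ⟨h, by rw [h, Nat.mod_self]⟩
  · right; exact ⟨by omega, Nat.mod_eq_of_lt h⟩

lemma rev_shift_iff (n u v : ℕ) (hu : u < n) (hv : v < n) :
    v = (u + 1) % n ↔ (n - u) % n = ((n - v) % n + 1) % n := by
  have hn : 0 < n := by omega
  rcases mod_char_or n (n - v) (by omega) hn with ⟨e1, e2⟩ | ⟨e1, e2⟩
  · rw [e2]
    rcases mod_char_or n (0 + 1) (by omega) hn with ⟨f1, f2⟩ | ⟨f1, f2⟩ <;>
      rw [f2] <;>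
      rcases mod_char_or n (n - u) (by omega) hn with ⟨e3, e4⟩ | ⟨e3, e4⟩ <;>
      rw [e4] <;>
      rcases mod_char_or n (u + 1) (by omega) hn with ⟨e5, e6⟩ | ⟨e5, e6⟩ <;>
      rw [e6] <;> omega
  · rw [e2]
    rcases mod_char_or n (n - v + 1) (by omega) hn with ⟨f1, f2⟩ | ⟨f1, f2⟩ <;>
      rw [f2] <;>
      rcases mod_char_or n (n - u) (by omega) hn with ⟨e3, e4⟩ | ⟨e3, e4⟩ <;>
      rw [e4] <;>
      rcases mod_char_or n (u + 1) (by omega) hn with ⟨e5, e6⟩ | ⟨e5, e6⟩ <;>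
      rw [e6] <;> omega

lemma rev_shift_val (n u v : ℕ) (hu : u < n) (hv : v < n) (h : v = (u + 1) % n) :
    (n - v) % n = n - 1 - u := by
  have hn : 0 < n := by omega
  rw [succ_mod_char n u hu] at h
  rw [neg_mod_char n v hv]
  split_ifs at h ⊢ <;> omega

end ModAux

section Transfer

lemma cRank_dual_of (A B : List ℕ) (hs : A.sum = B.sum) (f : ℕ → ℕ)
    (hf : ∀ e, e < A.sum → f e < B.sum)
    (hinj : ∀ e e', e < A.sum → e' < A.sum → f e = f e' → e = e')
    (hstep : ∀ x y : Fin A.sum,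
      cStep A x y ↔ cStep B ⟨f y.val, hf _ y.isLt⟩ ⟨f x.val, hf _ x.isLt⟩)
    (k : ℕ) (hk : k ≤ A.sum) : cRank A k = cRank B (B.sum - k) := by
  classical
  let F : Fin A.sum → Fin B.sum := fun x => ⟨f x.val, hf _ x.isLt⟩
  have hFinj : Function.Injective F := fun x y h =>
    Fin.ext (hinj _ _ x.isLt y.isLt (congrArg Fin.val h))
  have hFbij : Function.Bijective F :=
    (Fintype.bijective_iff_injective_and_card F).mpr ⟨hFinj, by simp [hs]⟩
  let φ : Fin A.sum ≃ Fin B.sum := Equiv.ofBijective F hFbij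
  have hle : ∀ x y, cLE A x y → cLE B (φ y) (φ x) := by
    intro x y h
    have h2 : Relation.ReflTransGen (Function.swap (cStep B)) (φ x) (φ y) :=
      Relation.ReflTransGen.lift (p := Function.swap (cStep B)) φ (fun a b hab => (hstep a b).mp hab) _ _ h
    exact Relation.reflTransGen_swap.mp h2
  have key : ∀ u v : Fin B.sum, cStep B u v → cStep A (φ.symm v) (φ.symm u) := by
    intro u v huv
    apply (hstep (φ.symm v) (φ.symm u)).mpr
    have e1 : (⟨f (φ.symm u).val, hf _ (φ.symm u).isLt⟩ : Fin B.sum) = u :=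
      φ.apply_symm_apply u
    have e2 : (⟨f (φ.symm v).val, hf _ (φ.symm v).isLt⟩ : Fin B.sum) = v :=
      φ.apply_symm_apply v
    rw [e1, e2]; exact huv
  have hle' : ∀ x y, cLE B x y → cLE A (φ.symm y) (φ.symm x) := by
    intro x y h
    have h2 : Relation.ReflTransGen (Function.swap (cStep A)) (φ.symm x) (φ.symm y) :=
      Relation.ReflTransGen.lift (p := Function.swap (cStep A)) φ.symm (fun a b hab => key a b hab) _ _ h
    exact Relation.reflTransGen_swap.mp h2
  have hId1 : ∀ I : Finset (Fin A.sum), IsCIdeal A I →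
      IsCIdeal B ((I.map φ.toEmbedding)ᶜ) := by
    intro I hI x y hxy hy
    rw [Finset.mem_compl, Finset.mem_map_equiv] at hy ⊢
    intro hx
    exact hy (hI _ _ (hle' _ _ hxy) hx)
  have hId2 : ∀ J : Finset (Fin B.sum), IsCIdeal B J →
      IsCIdeal A ((Jᶜ).map φ.symm.toEmbedding) := by
    intro J hJ x y hxy hy
    rw [Finset.mem_map_equiv] at hy ⊢
    rw [Finset.mem_compl] at hy ⊢
    simp only [Equiv.symm_symm] at hy ⊢
    intro hx
    exact hy (hJ _ _ (hle _ _ hxy) hx)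
  unfold cRank
  apply Nat.card_congr
  refine
    { toFun := fun I => ⟨(I.1.map φ.toEmbedding)ᶜ, hId1 _ I.2.1, ?_⟩
      invFun := fun J => ⟨(J.1ᶜ).map φ.symm.toEmbedding, hId2 _ J.2.1, ?_⟩
      left_inv := ?_
      right_inv := ?_ }
  · rw [Finset.card_compl, Finset.card_map, Fintype.card_fin, I.2.2]
  · rw [Finset.card_map, Finset.card_compl, Fintype.card_fin, J.2.2]
    omega
  · rintro ⟨I, hI⟩
    ext x
    simp [Finset.mem_map_equiv]
  · rintro ⟨J, hJ⟩
    ext x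
    simp [Finset.mem_map_equiv]

lemma cRank_iso_of (A B : List ℕ) (hs : A.sum = B.sum) (f : ℕ → ℕ)
    (hf : ∀ e, e < A.sum → f e < B.sum)
    (hinj : ∀ e e', e < A.sum → e' < A.sum → f e = f e' → e = e')
    (hstep : ∀ x y : Fin A.sum,
      cStep A x y ↔ cStep B ⟨f x.val, hf _ x.isLt⟩ ⟨f y.val, hf _ y.isLt⟩)
    (k : ℕ) : cRank A k = cRank B k := by
  classical
  let F : Fin A.sum → Fin B.sum := fun x => ⟨f x.val, hf _ x.isLt⟩
  have hFinj : Function.Injective F := fun x y h =>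
    Fin.ext (hinj _ _ x.isLt y.isLt (congrArg Fin.val h))
  have hFbij : Function.Bijective F :=
    (Fintype.bijective_iff_injective_and_card F).mpr ⟨hFinj, by simp [hs]⟩
  let φ : Fin A.sum ≃ Fin B.sum := Equiv.ofBijective F hFbij
  have hle : ∀ x y, cLE A x y → cLE B (φ x) (φ y) := fun x y h =>
    Relation.ReflTransGen.lift (p := cStep B) φ (fun a b hab => (hstep a b).mp hab) _ _ h
  have key : ∀ u v : Fin B.sum, cStep B u v → cStep A (φ.symm u) (φ.symm v) := by
    intro u v huv
    apply (hstep (φ.symm u) (φ.symm v)).mpr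
    have e1 : (⟨f (φ.symm u).val, hf _ (φ.symm u).isLt⟩ : Fin B.sum) = u :=
      φ.apply_symm_apply u
    have e2 : (⟨f (φ.symm v).val, hf _ (φ.symm v).isLt⟩ : Fin B.sum) = v :=
      φ.apply_symm_apply v
    rw [e1, e2]; exact huv
  have hle' : ∀ x y, cLE B x y → cLE A (φ.symm x) (φ.symm y) := fun x y h =>
    Relation.ReflTransGen.lift (p := cStep A) φ.symm (fun a b hab => key a b hab) _ _ h
  have hId1 : ∀ I : Finset (Fin A.sum), IsCIdeal A I →
      IsCIdeal B (I.map φ.toEmbedding) := by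
    intro I hI x y hxy hy
    rw [Finset.mem_map_equiv] at hy ⊢
    exact hI _ _ (hle' _ _ hxy) hy
  have hId2 : ∀ J : Finset (Fin B.sum), IsCIdeal B J →
      IsCIdeal A (J.map φ.symm.toEmbedding) := by
    intro J hJ x y hxy hy
    rw [Finset.mem_map_equiv] at hy ⊢
    simp only [Equiv.symm_symm] at hy ⊢
    exact hJ _ _ (hle _ _ hxy) hy
  unfold cRank
  apply Nat.card_congr
  refine
    { toFun := fun I => ⟨I.1.map φ.toEmbedding, hId1 _ I.2.1, by
        rw [Finset.card_map, I.2.2]⟩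
      invFun := fun J => ⟨J.1.map φ.symm.toEmbedding, hId2 _ J.2.1, by
        rw [Finset.card_map, J.2.2]⟩
      left_inv := ?_
      right_inv := ?_ }
  · rintro ⟨I, hI⟩
    ext x
    simp [Finset.mem_map_equiv]
  · rintro ⟨J, hJ⟩
    ext x
    simp [Finset.mem_map_equiv]

end Transfer

section Mains

lemma main_rotate (α : List ℕ) (hα : IsComposition α) (heven : Even α.length)
    (k : ℕ) (hk : k ≤ α.sum) : cRank (α.rotate 1) k = cRank α (α.sum - k) := by
  obtain ⟨hne, hpos⟩ := hα
  cases α with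
  | nil => exact absurd rfl hne
  | cons a β =>
    have ha : 0 < a := hpos a (List.mem_cons_self (a := a) (l := β))
    have hcs : (a :: β).sum = a + β.sum := List.sum_cons
    have hn : 0 < (a :: β).sum := by omega
    have hrot : (a :: β).rotate 1 = β ++ [a] := by
      rw [List.rotate_cons_succ, List.rotate_zero]
    have hsum : (β ++ [a]).sum = (a :: β).sum := by
      rw [List.sum_append, hcs]; simp [add_comm]
    rw [hrot]
    apply cRank_dual_of _ _ hsum (fun e => (e + a) % ((a :: β).sum)) ?hf ?hinj ?hstep k
      (by omega)
    case hf => intro e he; exact Nat.mod_lt _ hn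
    case hinj =>
      intro e e' he he' hfe
      have h' : e + a ≡ e' + a [MOD (a :: β).sum] := hfe
      have h2 := Nat.ModEq.add_right_cancel' a h'
      rwa [Nat.ModEq, Nat.mod_eq_of_lt (by omega : e < (a :: β).sum),
        Nat.mod_eq_of_lt (by omega : e' < (a :: β).sum)] at h2
    case hstep =>
      intro x y
      have hL : Even (β.length + 1) := by simpa using heven
      obtain ⟨xv, hxv⟩ := x
      obtain ⟨yv, hyv⟩ := y
      have hx : xv < a + β.sum := by omega
      have hy : yv < a + β.sum := by omega
      show (yv = (xv + 1) % (β ++ [a]).sum ∧ upEdge (β ++ [a]) xv) ∨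
          (xv = (yv + 1) % (β ++ [a]).sum ∧ ¬ upEdge (β ++ [a]) yv) ↔
        ((xv + a) % (a :: β).sum = ((yv + a) % (a :: β).sum + 1) % (a :: β).sum ∧
            upEdge (a :: β) ((yv + a) % (a :: β).sum)) ∨
          ((yv + a) % (a :: β).sum = ((xv + a) % (a :: β).sum + 1) % (a :: β).sum ∧
            ¬ upEdge (a :: β) ((xv + a) % (a :: β).sum))
      rw [hsum, hcs]
      constructor
      · rintro (⟨h1, h2⟩ | ⟨h1, h2⟩)
        · right
          exact ⟨(mod_shift _ a _ _ hy).mp h1,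
            (upEdge_rotate a β hL xv hx).mp h2⟩
        · left
          refine ⟨(mod_shift _ a _ _ hx).mp h1, ?_⟩
          by_contra hcon
          exact h2 ((upEdge_rotate a β hL yv hy).mpr hcon)
      · rintro (⟨h1, h2⟩ | ⟨h1, h2⟩)
        · right
          refine ⟨(mod_shift _ a _ _ hx).mpr h1, ?_⟩
          intro hup
          exact (upEdge_rotate a β hL yv hy).mp hup h2
        · left
          exact ⟨(mod_shift _ a _ _ hy).mpr h1,
            (upEdge_rotate a β hL xv hx).mpr h2⟩

lemma main_reverse (α : List ℕ) (hn : 0 < α.sum) (heven : Even α.length)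
    (k : ℕ) : cRank α k = cRank α.reverse k := by
  have hs : α.sum = α.reverse.sum := (List.sum_reverse α).symm
  apply cRank_iso_of _ _ hs (fun e => (α.sum - e) % α.sum) ?hf ?hinj ?hstep k
  case hf => intro e he; rw [← hs]; exact Nat.mod_lt _ hn
  case hinj =>
    intro e e' he he' hfe0
    have hfe : (α.sum - e) % α.sum = (α.sum - e') % α.sum := hfe0
    rcases mod_char_or α.sum (α.sum - e) (by omega) hn with ⟨e1, e2⟩ | ⟨e1, e2⟩ <;>
      rcases mod_char_or α.sum (α.sum - e') (by omega) hn with ⟨f1, f2⟩ | ⟨f1, f2⟩ <;>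
      rw [e2, f2] at hfe <;> omega
  case hstep =>
    intro x y
    have hx := x.isLt
    have hy := y.isLt
    show (y.val = (x.val + 1) % α.sum ∧ upEdge α x.val) ∨
        (x.val = (y.val + 1) % α.sum ∧ ¬ upEdge α y.val) ↔
      ((α.sum - y.val) % α.sum = ((α.sum - x.val) % α.sum + 1) % α.reverse.sum ∧
          upEdge α.reverse ((α.sum - x.val) % α.sum)) ∨
        ((α.sum - x.val) % α.sum = ((α.sum - y.val) % α.sum + 1) % α.reverse.sum ∧
          ¬ upEdge α.reverse ((α.sum - y.val) % α.sum))
    rw [List.sum_reverse]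
    constructor
    · rintro (⟨h1, h2⟩ | ⟨h1, h2⟩)
      · right
        refine ⟨(rev_shift_iff α.sum x.val y.val hx hy).mp h1, ?_⟩
        rw [rev_shift_val α.sum x.val y.val hx hy h1]
        intro hup
        exact (upEdge_reverse α heven x.val hx).mp hup h2
      · left
        refine ⟨(rev_shift_iff α.sum y.val x.val hy hx).mp h1, ?_⟩
        rw [rev_shift_val α.sum y.val x.val hy hx h1]
        exact (upEdge_reverse α heven y.val hy).mpr h2
    · rintro (⟨h1, h2⟩ | ⟨h1, h2⟩)
      · right
        have hxy : x.val = (y.val + 1) % α.sum :=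
          (rev_shift_iff α.sum y.val x.val hy hx).mpr h1
        refine ⟨hxy, ?_⟩
        rw [rev_shift_val α.sum y.val x.val hy hx hxy] at h2
        exact (upEdge_reverse α heven y.val hy).mp h2
      · left
        have hyx : y.val = (x.val + 1) % α.sum :=
          (rev_shift_iff α.sum x.val y.val hx hy).mpr h1
        refine ⟨hyx, ?_⟩
        rw [rev_shift_val α.sum x.val y.val hx hy hyx] at h2
        by_contra hcon
        exact h2 ((upEdge_reverse α heven x.val hx).mpr hcon)

end Mains


/-- A one-step cyclic shift of the composition reverses the rank sequence
of the circular fence poset; in particular the rank sequence of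
`F̄((k,1,1,…,1))` (with an even number of parts) is symmetric. -/
theorem circular_rank_shift_reverses (α : List ℕ) (hα : IsComposition α)
    (heven : Even α.length) :
    (∀ k ≤ α.sum, cRank (α.rotate 1) k = cRank α (α.sum - k)) ∧
    (∀ k s : ℕ, 0 < k → 0 < s →
      ∀ j ≤ (k :: List.replicate (2 * s - 1) 1).sum,
        cRank (k :: List.replicate (2 * s - 1) 1) j =
          cRank (k :: List.replicate (2 * s - 1) 1)
            ((k :: List.replicate (2 * s - 1) 1).sum - j)) := by
  constructor
  · intro k hk
    exact main_rotate α hα heven k hk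
  · intro k s hk hs j hj
    set γ := k :: List.replicate (2 * s - 1) 1 with hγ
    have hγcomp : IsComposition γ := by
      refine ⟨by simp [hγ], ?_⟩
      intro p hp
      rw [hγ, List.mem_cons] at hp
      rcases hp with rfl | hp
      · exact hk
      · rw [List.eq_of_mem_replicate hp]; omega
    have hγlen : Even γ.length := by
      rw [hγ]
      refine ⟨s, ?_⟩
      simp [List.length_replicate]
      omega
    have hγsum : 0 < γ.sum := by
      rw [hγ]
      simp [List.sum_cons]
      omega
    have hrev : γ.reverse = γ.rotate 1 := by
      rw [hγ, List.rotate_cons_succ, List.rotate_zero, List.reverse_cons,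
        List.reverse_replicate]
    calc cRank γ j = cRank γ.reverse j := main_reverse γ hγsum hγlen j
      _ = cRank (γ.rotate 1) j := by rw [hrev]
      _ = cRank γ (γ.sum - j) := main_rotate γ hγcomp hγlen j hj
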